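/- arXiv:2002.07944 — 8 statements merged into one kernel-verified Lean document; each statement's English description precedes it below -/
import Mathlib

section
/- The distributive λ-calculus is confluent: if s₁ *← t →* s₂ then there exists u with s₁ →* u *← s₂. -/
inductive Tm : Type
| var : ℕ → Tm
| lam : Tm → Tm
| app : Tm → Tm → Tm
| pair : Tm → Tm → Tm
| p1 : Tm → Tm
| p2 : Tm → Tm

namespace Tm

/-- Renaming of de Bruijn indices. -/
def rename (f : ℕ → ℕ) : Tm → Tm
| var n => var (f n)
| lam t => lam (t.rename (fun n => match n with | 0 => 0 | n+1 => f n + 1))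
| app t s => app (t.rename f) (s.rename f)
| pair t s => pair (t.rename f) (s.rename f)
| p1 t => p1 (t.rename f)
| p2 t => p2 (t.rename f)

/-- Capture-avoiding simultaneous substitution. -/
def subst (σ : ℕ → Tm) : Tm → Tm
| var n => σ n
| lam t => lam (t.subst (fun n => match n with | 0 => var 0 | n+1 => (σ n).rename Nat.succ))
| app t s => app (t.subst σ) (s.subst σ)
| pair t s => pair (t.subst σ) (s.subst σ)
| p1 t => p1 (t.subst σ)
| p2 t => p2 (t.subst σ)

/-- Substitution of the single (outermost) free variable: t[x := s]. -/
def subst1 (t s : Tm) : Tm :=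
  t.subst (fun n => match n with | 0 => s | n+1 => var n)

/-- One-step reduction of the distributive λ-calculus. -/
inductive Step : Tm → Tm → Prop
| beta (t s) : Step (app (lam t) s) (t.subst1 s)
| proj1 (t1 t2) : Step (p1 (pair t1 t2)) t1
| proj2 (t1 t2) : Step (p2 (pair t1 t2)) t2
| pairApp (t s u) : Step (app (pair t s) u) (pair (app t u) (app s u))
| projLam1 (t) : Step (p1 (lam t)) (lam (p1 t))
| projLam2 (t) : Step (p2 (lam t)) (lam (p2 t))
| lam_cong {t t'} : Step t t' → Step (lam t) (lam t')
| appL {t t' s} : Step t t' → Step (app t s) (app t' s)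
| appR {t s s'} : Step s s' → Step (app t s) (app t s')
| pairL {t t' s} : Step t t' → Step (pair t s) (pair t' s)
| pairR {t s s'} : Step s s' → Step (pair t s) (pair t s')
| p1_cong {t t'} : Step t t' → Step (p1 t) (p1 t')
| p2_cong {t t'} : Step t t' → Step (p2 t) (p2 t')

/-- Many-step reduction. -/
def Steps : Tm → Tm → Prop := Relation.ReflTransGen Step

/-- A term is normal when no rule applies anywhere in it. -/
def Normal (t : Tm) : Prop := ¬ ∃ s, Step t s

/-- All free variables are < k. -/
def closedUnder : ℕ → Tm → Prop
| k, var n => n < k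
| k, lam t => closedUnder (k+1) t
| k, app t s => closedUnder k t ∧ closedUnder k s
| k, pair t s => closedUnder k t ∧ closedUnder k s
| k, p1 t => closedUnder k t
| k, p2 t => closedUnder k t

def Closed (t : Tm) : Prop := closedUnder 0 t

/-- Values: variables, abstractions, pairs. -/
def IsValue : Tm → Prop
| var _ => True
| lam _ => True
| pair _ _ => True
| _ => False

/-- Neutral terms: variables, applications, projections. -/
def Neutral : Tm → Prop
| var _ => True
| app _ _ => True
| p1 _ => True
| p2 _ => True
| _ => False

/-- Strong normalization: every reduction sequence is finite. -/
def SN (t : Tm) : Prop := Acc (fun a b => Step b a) t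

end Tm

inductive Ty : Type
| base : Ty
| arr : Ty → Ty → Ty
| conj : Ty → Ty → Ty

/-- The least congruence containing distributivity A ⇒ (B ∧ C) ≡ (A ⇒ B) ∧ (A ⇒ C). -/
inductive Iso : Ty → Ty → Prop
| refl (A) : Iso A A
| symm {A B} : Iso A B → Iso B A
| trans {A B C} : Iso A B → Iso B C → Iso A C
| distr (A B C) : Iso (Ty.arr A (Ty.conj B C)) (Ty.conj (Ty.arr A B) (Ty.arr A C))
| arrL {A C} (B) : Iso A C → Iso (Ty.arr A B) (Ty.arr C B)
| arrR {B C} (A) : Iso B C → Iso (Ty.arr A B) (Ty.arr A C)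
| conjL {A C} (B) : Iso A C → Iso (Ty.conj A B) (Ty.conj C B)
| conjR {B C} (A) : Iso B C → Iso (Ty.conj A B) (Ty.conj A C)

/-- Typing, with contexts as lists of types (de Bruijn), including the conversion rule for ≡. -/
inductive Typing : List Ty → Tm → Ty → Prop
| var {Γ n A} : Γ[n]? = some A → Typing Γ (Tm.var n) A
| lam {Γ t A B} : Typing (A :: Γ) t B → Typing Γ (Tm.lam t) (Ty.arr A B)
| app {Γ t s A B} : Typing Γ t (Ty.arr A B) → Typing Γ s A → Typing Γ (Tm.app t s) B
| pair {Γ t s A B} : Typing Γ t A → Typing Γ s B → Typing Γ (Tm.pair t s) (Ty.conj A B)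
| p1 {Γ t A B} : Typing Γ t (Ty.conj A B) → Typing Γ (Tm.p1 t) A
| p2 {Γ t A B} : Typing Γ t (Ty.conj A B) → Typing Γ (Tm.p2 t) B
| iso {Γ t A B} : Typing Γ t A → Iso A B → Typing Γ t B

/-- Reducibility interpretation of types. -/
def Red : Ty → Tm → Prop
| Ty.base, t => Tm.SN t
| Ty.arr A B, t => ∀ s, Red A s → Red B (Tm.app t s)
| Ty.conj A B, t => Red A (Tm.p1 t) ∧ Red B (Tm.p2 t)

namespace Tm

/-! ### Substitution lemmas -/

theorem rename_ext {f g : ℕ → ℕ} (h : ∀ n, f n = g n) : ∀ t, rename f t = rename g t := by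
  intro t
  induction t generalizing f g with
  | var n => simp [rename, h]
  | lam t ih =>
    simp only [rename]
    congr 1
    apply ih
    intro n; cases n <;> simp [h]
  | app t s iht ihs => simp [rename, iht h, ihs h]
  | pair t s iht ihs => simp [rename, iht h, ihs h]
  | p1 t ih => simp [rename, ih h]
  | p2 t ih => simp [rename, ih h]

theorem subst_ext {σ τ : ℕ → Tm} (h : ∀ n, σ n = τ n) : ∀ t, subst σ t = subst τ t := by
  intro t
  induction t generalizing σ τ with
  | var n => simp [subst, h]
  | lam t ih =>
    simp only [subst]
    congr 1
    apply ih
    intro n; cases n <;> simp [h]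
  | app t s iht ihs => simp [subst, iht h, ihs h]
  | pair t s iht ihs => simp [subst, iht h, ihs h]
  | p1 t ih => simp [subst, ih h]
  | p2 t ih => simp [subst, ih h]

theorem rename_rename (f g : ℕ → ℕ) (t : Tm) :
    rename g (rename f t) = rename (fun n => g (f n)) t := by
  induction t generalizing f g with
  | var n => simp [rename]
  | lam t ih =>
    simp only [rename]
    congr 1
    rw [ih]
    apply rename_ext
    intro n; cases n <;> simp
  | app t s iht ihs => simp [rename, iht, ihs]
  | pair t s iht ihs => simp [rename, iht, ihs]
  | p1 t ih => simp [rename, ih]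
  | p2 t ih => simp [rename, ih]

theorem subst_rename (σ : ℕ → Tm) (f : ℕ → ℕ) (t : Tm) :
    subst σ (rename f t) = subst (fun n => σ (f n)) t := by
  induction t generalizing f σ with
  | var n => simp [rename, subst]
  | lam t ih =>
    simp only [rename, subst]
    congr 1
    rw [ih]
    apply subst_ext
    intro n; cases n <;> simp
  | app t s iht ihs => simp [rename, subst, iht, ihs]
  | pair t s iht ihs => simp [rename, subst, iht, ihs]
  | p1 t ih => simp [rename, subst, ih]
  | p2 t ih => simp [rename, subst, ih]

theorem rename_subst (f : ℕ → ℕ) (σ : ℕ → Tm) (t : Tm) :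
    rename f (subst σ t) = subst (fun n => rename f (σ n)) t := by
  induction t generalizing f σ with
  | var n => simp [rename, subst]
  | lam t ih =>
    simp only [rename, subst]
    congr 1
    rw [ih]
    apply subst_ext
    intro n; cases n with
    | zero => simp [rename]
    | succ n => simp [rename_rename]
  | app t s iht ihs => simp [rename, subst, iht, ihs]
  | pair t s iht ihs => simp [rename, subst, iht, ihs]
  | p1 t ih => simp [rename, subst, ih]
  | p2 t ih => simp [rename, subst, ih]

theorem subst_subst (σ τ : ℕ → Tm) (t : Tm) :
    subst τ (subst σ t) = subst (fun n => subst τ (σ n)) t := by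
  induction t generalizing σ τ with
  | var n => simp [subst]
  | lam t ih =>
    simp only [subst]
    congr 1
    rw [ih]
    apply subst_ext
    intro n; cases n with
    | zero => simp [subst]
    | succ n => simp [subst_rename, rename_subst]
  | app t s iht ihs => simp [subst, iht, ihs]
  | pair t s iht ihs => simp [subst, iht, ihs]
  | p1 t ih => simp [subst, ih]
  | p2 t ih => simp [subst, ih]

theorem subst_var (t : Tm) : subst (fun n => var n) t = t := by
  induction t with
  | var n => simp [subst]
  | lam t ih =>
    simp only [subst]
    congr 1
    conv_rhs => rw [← ih]
    apply subst_ext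
    intro n; cases n <;> simp [rename]
  | app t s iht ihs => simp [subst, iht, ihs]
  | pair t s iht ihs => simp [subst, iht, ihs]
  | p1 t ih => simp [subst, ih]
  | p2 t ih => simp [subst, ih]

theorem subst1_subst (σ : ℕ → Tm) (t s : Tm) :
    subst σ (subst1 t s) =
      subst1 (subst (fun n => match n with | 0 => var 0 | n+1 => (σ n).rename Nat.succ) t)
        (subst σ s) := by
  simp only [subst1, subst_subst]
  apply subst_ext
  intro n; cases n with
  | zero => simp [subst]
  | succ n => simp [subst_rename, subst]; rw [subst_var]

/-! ### Parallel reduction -/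

inductive Par : Tm → Tm → Prop
| var (n) : Par (var n) (var n)
| lam {t t'} : Par t t' → Par (lam t) (lam t')
| app {t t' s s'} : Par t t' → Par s s' → Par (app t s) (app t' s')
| pair {t t' s s'} : Par t t' → Par s s' → Par (pair t s) (pair t' s')
| p1 {t t'} : Par t t' → Par (p1 t) (p1 t')
| p2 {t t'} : Par t t' → Par (p2 t) (p2 t')
| beta {t t' s s'} : Par t t' → Par s s' → Par (app (lam t) s) (t'.subst1 s')
| proj1 {a a' b b'} : Par a a' → Par b b' → Par (p1 (pair a b)) a'
| proj2 {a a' b b'} : Par a a' → Par b b' → Par (p2 (pair a b)) b'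
| distr {a a' b b' u u'} : Par a a' → Par b b' → Par u u' →
    Par (app (pair a b) u) (pair (app a' u') (app b' u'))
| plam1 {t t'} : Par t t' → Par (p1 (lam t)) (lam (p1 t'))
| plam2 {t t'} : Par t t' → Par (p2 (lam t)) (lam (p2 t'))

theorem Par.refl (t : Tm) : Par t t := by
  induction t with
  | var n => exact Par.var n
  | lam t ih => exact Par.lam ih
  | app t s iht ihs => exact Par.app iht ihs
  | pair t s iht ihs => exact Par.pair iht ihs
  | p1 t ih => exact Par.p1 ih
  | p2 t ih => exact Par.p2 ih

theorem par_rename {t t' : Tm} (f : ℕ → ℕ) (h : Par t t') :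
    Par (rename f t) (rename f t') := by
  induction h generalizing f with
  | var n => exact Par.var _
  | lam _ ih => exact Par.lam (ih _)
  | app _ _ iht ihs => exact Par.app (iht f) (ihs f)
  | pair _ _ iht ihs => exact Par.pair (iht f) (ihs f)
  | p1 _ ih => exact Par.p1 (ih f)
  | p2 _ ih => exact Par.p2 (ih f)
  | @beta t t' s s' _ _ iht ihs =>
    have : rename f (t'.subst1 s') =
        (rename (fun n => match n with | 0 => 0 | n+1 => f n + 1) t').subst1 (rename f s') := by
      simp only [subst1, rename_subst, subst_rename]
      apply subst_ext
      intro n; cases n <;> simp [rename]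
    rw [this]
    exact Par.beta (iht _) (ihs f)
  | proj1 _ _ iha ihb => exact Par.proj1 (iha f) (ihb f)
  | proj2 _ _ iha ihb => exact Par.proj2 (iha f) (ihb f)
  | distr _ _ _ iha ihb ihu => exact Par.distr (iha f) (ihb f) (ihu f)
  | plam1 _ ih => exact Par.plam1 (ih _)
  | plam2 _ ih => exact Par.plam2 (ih _)

theorem par_up {σ σ' : ℕ → Tm} (hσ : ∀ n, Par (σ n) (σ' n)) :
    ∀ n, Par ((fun n => match n with | 0 => var 0 | n+1 => (σ n).rename Nat.succ) n)
      ((fun n => match n with | 0 => var 0 | n+1 => (σ' n).rename Nat.succ) n) := by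
  intro n; cases n with
  | zero => exact Par.var 0
  | succ n => exact par_rename Nat.succ (hσ n)

theorem par_subst {t t' : Tm} {σ σ' : ℕ → Tm} (hσ : ∀ n, Par (σ n) (σ' n))
    (h : Par t t') : Par (subst σ t) (subst σ' t') := by
  induction h generalizing σ σ' with
  | var n => exact hσ n
  | lam _ ih => exact Par.lam (ih (par_up hσ))
  | app _ _ iht ihs => exact Par.app (iht hσ) (ihs hσ)
  | pair _ _ iht ihs => exact Par.pair (iht hσ) (ihs hσ)
  | p1 _ ih => exact Par.p1 (ih hσ)
  | p2 _ ih => exact Par.p2 (ih hσ)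
  | @beta t t' s s' _ _ iht ihs =>
    rw [subst1_subst]
    exact Par.beta (iht (par_up hσ)) (ihs hσ)
  | proj1 _ _ iha ihb => exact Par.proj1 (iha hσ) (ihb hσ)
  | proj2 _ _ iha ihb => exact Par.proj2 (iha hσ) (ihb hσ)
  | distr _ _ _ iha ihb ihu => exact Par.distr (iha hσ) (ihb hσ) (ihu hσ)
  | plam1 _ ih => exact Par.plam1 (ih (par_up hσ))
  | plam2 _ ih => exact Par.plam2 (ih (par_up hσ))

theorem par_subst1 {t t' s s' : Tm} (ht : Par t t') (hs : Par s s') :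
    Par (subst1 t s) (subst1 t' s') := by
  refine par_subst ?_ ht
  intro n; cases n with
  | zero => exact hs
  | succ n => exact Par.var n

/-! ### Complete development -/

def dev : Tm → Tm
| var n => var n
| lam t => lam (dev t)
| pair t s => pair (dev t) (dev s)
| app t s =>
  match t with
  | lam t0 => (dev t0).subst1 (dev s)
  | pair a b => pair (app (dev a) (dev s)) (app (dev b) (dev s))
  | t => app (dev t) (dev s)
| p1 t =>
  match t with
  | pair a b => dev a
  | lam t0 => lam (p1 (dev t0))
  | t => p1 (dev t)
| p2 t =>
  match t with
  | pair a b => dev b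
  | lam t0 => lam (p2 (dev t0))
  | t => p2 (dev t)

theorem par_lam_inv {t u : Tm} (h : Par (lam t) u) : ∃ t', u = lam t' ∧ Par t t' := by
  cases h with
  | lam h => exact ⟨_, rfl, h⟩

theorem par_pair_inv {a b u : Tm} (h : Par (pair a b) u) :
    ∃ a' b', u = pair a' b' ∧ Par a a' ∧ Par b b' := by
  cases h with
  | pair ha hb => exact ⟨_, _, rfl, ha, hb⟩

theorem par_dev {t u : Tm} (h : Par t u) : Par u (dev t) := by
  induction h with
  | var n => exact Par.var n
  | @lam t t' _ ih => exact Par.lam ih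
  | @app t t' s s' ht _ iht ihs =>
    cases t with
    | lam t0 =>
      obtain ⟨t0', rfl, h0⟩ := par_lam_inv ht
      cases iht with
      | lam ih0 => exact Par.beta ih0 ihs
    | pair a b =>
      obtain ⟨a', b', rfl, _, _⟩ := par_pair_inv ht
      cases iht with
      | pair iha ihb => exact Par.distr iha ihb ihs
    | var n => exact Par.app iht ihs
    | app a b => exact Par.app iht ihs
    | p1 a => exact Par.app iht ihs
    | p2 a => exact Par.app iht ihs
  | pair _ _ iht ihs => exact Par.pair iht ihs
  | @p1 t t' ht ih =>
    cases t with
    | pair a b =>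
      obtain ⟨a', b', rfl, _, _⟩ := par_pair_inv ht
      cases ih with
      | pair iha ihb => exact Par.proj1 iha ihb
    | lam t0 =>
      obtain ⟨t0', rfl, _⟩ := par_lam_inv ht
      cases ih with
      | lam ih0 => exact Par.plam1 ih0
    | var n => exact Par.p1 ih
    | app a b => exact Par.p1 ih
    | p1 a => exact Par.p1 ih
    | p2 a => exact Par.p1 ih
  | @p2 t t' ht ih =>
    cases t with
    | pair a b =>
      obtain ⟨a', b', rfl, _, _⟩ := par_pair_inv ht
      cases ih with
      | pair iha ihb => exact Par.proj2 iha ihb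
    | lam t0 =>
      obtain ⟨t0', rfl, _⟩ := par_lam_inv ht
      cases ih with
      | lam ih0 => exact Par.plam2 ih0
    | var n => exact Par.p2 ih
    | app a b => exact Par.p2 ih
    | p1 a => exact Par.p2 ih
    | p2 a => exact Par.p2 ih
  | beta _ _ iht ihs => exact par_subst1 iht ihs
  | proj1 _ _ iha ihb => exact iha
  | proj2 _ _ iha ihb => exact ihb
  | distr _ _ _ iha ihb ihu =>
    exact Par.pair (Par.app iha ihu) (Par.app ihb ihu)
  | plam1 _ ih => exact Par.lam (Par.p1 ih)
  | plam2 _ ih => exact Par.lam (Par.p2 ih)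

theorem par_diamond {t u v : Tm} (hu : Par t u) (hv : Par t v) :
    ∃ w, Par u w ∧ Par v w :=
  ⟨dev t, par_dev hu, par_dev hv⟩

/-! ### From Par to Steps -/

theorem step_par {t u : Tm} (h : Step t u) : Par t u := by
  induction h with
  | beta t s => exact Par.beta (Par.refl t) (Par.refl s)
  | proj1 a b => exact Par.proj1 (Par.refl a) (Par.refl b)
  | proj2 a b => exact Par.proj2 (Par.refl a) (Par.refl b)
  | pairApp a b u => exact Par.distr (Par.refl a) (Par.refl b) (Par.refl u)
  | projLam1 t => exact Par.plam1 (Par.refl t)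
  | projLam2 t => exact Par.plam2 (Par.refl t)
  | lam_cong _ ih => exact Par.lam ih
  | appL _ ih => exact Par.app ih (Par.refl _)
  | appR _ ih => exact Par.app (Par.refl _) ih
  | pairL _ ih => exact Par.pair ih (Par.refl _)
  | pairR _ ih => exact Par.pair (Par.refl _) ih
  | p1_cong _ ih => exact Par.p1 ih
  | p2_cong _ ih => exact Par.p2 ih

theorem steps_lam {t t'} (h : Steps t t') : Steps (lam t) (lam t') :=
  Relation.ReflTransGen.lift lam (fun _ _ => Step.lam_cong) _ _ h

theorem steps_appL {t t' s} (h : Steps t t') : Steps (app t s) (app t' s) :=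
  Relation.ReflTransGen.lift (fun x => app x s) (fun _ _ => Step.appL) _ _ h

theorem steps_appR {t s s'} (h : Steps s s') : Steps (app t s) (app t s') :=
  Relation.ReflTransGen.lift (fun x => app t x) (fun _ _ => Step.appR) _ _ h

theorem steps_pairL {t t' s} (h : Steps t t') : Steps (pair t s) (pair t' s) :=
  Relation.ReflTransGen.lift (fun x => pair x s) (fun _ _ => Step.pairL) _ _ h

theorem steps_pairR {t s s'} (h : Steps s s') : Steps (pair t s) (pair t s') :=
  Relation.ReflTransGen.lift (fun x => pair t x) (fun _ _ => Step.pairR) _ _ h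

theorem steps_p1 {t t'} (h : Steps t t') : Steps (p1 t) (p1 t') :=
  Relation.ReflTransGen.lift p1 (fun _ _ => Step.p1_cong) _ _ h

theorem steps_p2 {t t'} (h : Steps t t') : Steps (p2 t) (p2 t') :=
  Relation.ReflTransGen.lift p2 (fun _ _ => Step.p2_cong) _ _ h

theorem par_steps {t u : Tm} (h : Par t u) : Steps t u := by
  induction h with
  | var n => exact Relation.ReflTransGen.refl
  | lam _ ih => exact steps_lam ih
  | app _ _ iht ihs => exact (steps_appL iht).trans (steps_appR ihs)
  | pair _ _ iht ihs => exact (steps_pairL iht).trans (steps_pairR ihs)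
  | p1 _ ih => exact steps_p1 ih
  | p2 _ ih => exact steps_p2 ih
  | @beta t t' s s' _ _ iht ihs =>
    exact ((steps_appL (steps_lam iht)).trans (steps_appR ihs)).tail (Step.beta t' s')
  | @proj1 a a' b b' _ _ iha ihb =>
    exact ((steps_p1 ((steps_pairL iha).trans (steps_pairR ihb)))).tail (Step.proj1 a' b')
  | @proj2 a a' b b' _ _ iha ihb =>
    exact ((steps_p2 ((steps_pairL iha).trans (steps_pairR ihb)))).tail (Step.proj2 a' b')
  | @distr a a' b b' u u' _ _ _ iha ihb ihu =>
    exact (((steps_appL ((steps_pairL iha).trans (steps_pairR ihb))).trans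
      (steps_appR ihu))).tail (Step.pairApp a' b' u')
  | @plam1 t t' _ ih =>
    exact (steps_p1 (steps_lam ih)).tail (Step.projLam1 t')
  | @plam2 t t' _ ih =>
    exact (steps_p2 (steps_lam ih)).tail (Step.projLam2 t')

theorem pars_strip {t u v : Tm} (hu : Par t u) (hv : Relation.ReflTransGen Par t v) :
    ∃ w, Relation.ReflTransGen Par u w ∧ Par v w := by
  induction hv with
  | refl => exact ⟨u, Relation.ReflTransGen.refl, hu⟩
  | tail _ h ih =>
    obtain ⟨w, hw1, hw2⟩ := ih
    obtain ⟨z, hz1, hz2⟩ := par_diamond hw2 h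
    exact ⟨z, hw1.tail hz1, hz2⟩

theorem pars_confluent {t u v : Tm} (hu : Relation.ReflTransGen Par t u)
    (hv : Relation.ReflTransGen Par t v) :
    ∃ w, Relation.ReflTransGen Par u w ∧ Relation.ReflTransGen Par v w := by
  induction hu with
  | refl => exact ⟨v, hv, Relation.ReflTransGen.refl⟩
  | tail _ h ih =>
    obtain ⟨w, hw1, hw2⟩ := ih
    obtain ⟨z, hz1, hz2⟩ := pars_strip h hw1
    exact ⟨z, hz1, hw2.tail hz2⟩

theorem steps_iff_pars {t u : Tm} : Steps t u ↔ Relation.ReflTransGen Par t u := by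
  constructor
  · exact fun h => Relation.ReflTransGen.mono (fun _ _ => step_par) _ _ h
  · intro h
    induction h with
    | refl => exact Relation.ReflTransGen.refl
    | tail _ h ih => exact ih.trans (par_steps h)

end Tm

theorem confluence (t s₁ s₂ : Tm) (h1 : Tm.Steps t s₁) (h2 : Tm.Steps t s₂) :
    ∃ u, Tm.Steps s₁ u ∧ Tm.Steps s₂ u := by
  obtain ⟨u, hu1, hu2⟩ := Tm.pars_confluent (Tm.steps_iff_pars.mp h1) (Tm.steps_iff_pars.mp h2)
  exact ⟨u, Tm.steps_iff_pars.mpr hu1, Tm.steps_iff_pars.mpr hu2⟩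
end

section
/- Generation for abstractions: if Γ ⊢ λx.s : A in the simply typed distributive λ-calculus with typing up to the distributivity isomorphism, then there exist types B, C with Γ, x:B ⊢ s : C and B ⇒ C ≡ A. -/
theorem gen_lam_aux {Γ t A} (h : Typing Γ t A) :
    ∀ s, t = Tm.lam s → ∃ B C, Typing (B :: Γ) s C ∧ Iso (Ty.arr B C) A := by
  induction h with
  | lam ht _ => exact fun s hs => by cases hs; exact ⟨_, _, ht, Iso.refl _⟩
  | iso _ hiso ih =>
    intro s hs
    obtain ⟨B, C, h1, h2⟩ := ih s hs
    exact ⟨B, C, h1, Iso.trans h2 hiso⟩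
  | var _ => intro s hs; cases hs
  | app _ _ _ _ => intro s hs; cases hs
  | pair _ _ _ _ => intro s hs; cases hs
  | p1 _ _ => intro s hs; cases hs
  | p2 _ _ => intro s hs; cases hs

theorem generation_lam (Γ : List Ty) (s : Tm) (A : Ty) (h : Typing Γ (Tm.lam s) A) :
    ∃ B C, Typing (B :: Γ) s C ∧ Iso (Ty.arr B C) A := by
  exact gen_lam_aux h s rfl
end

section
/- Generation for applications: if Γ ⊢ s u : A in the simply typed distributive λ-calculus with typing up to distributivity, then there exists a type B with Γ ⊢ s : B ⇒ A and Γ ⊢ u : B. -/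
theorem generation_app (Γ : List Ty) (s u : Tm) (A : Ty) (h : Typing Γ (Tm.app s u) A) :
    ∃ B, Typing Γ s (Ty.arr B A) ∧ Typing Γ u B := by
  generalize hts : Tm.app s u = t at h
  induction h generalizing s u with
  | var _ => cases hts
  | lam _ _ => cases hts
  | app ht hu _ _ => cases hts; exact ⟨_, ht, hu⟩
  | pair _ _ _ _ => cases hts
  | p1 _ _ => cases hts
  | p2 _ _ => cases hts
  | iso _ hiso ih =>
    obtain ⟨B, hs, hu⟩ := ih _ _ hts
    exact ⟨B, Typing.iso hs (Iso.arrR _ hiso), hu⟩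
end

section
/- Generation for projections: if Γ ⊢ πᵢ s : A (i=1,2) in the simply typed distributive λ-calculus with typing up to distributivity, then there exist types B₁, B₂ with Γ ⊢ s : B₁ ∧ B₂ and Bᵢ = A. -/
theorem gen_aux {Γ t A} (h : Typing Γ t A) :
    (∀ s, t = Tm.p1 s → ∃ B₁ B₂, Typing Γ s (Ty.conj B₁ B₂) ∧ B₁ = A) ∧
    (∀ s, t = Tm.p2 s → ∃ B₁ B₂, Typing Γ s (Ty.conj B₁ B₂) ∧ B₂ = A) := by
  induction h with
  | var h => exact ⟨(fun s hs => by cases hs), fun s hs => by cases hs⟩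
  | lam _ _ => exact ⟨(fun s hs => by cases hs), fun s hs => by cases hs⟩
  | app _ _ _ _ => exact ⟨(fun s hs => by cases hs), fun s hs => by cases hs⟩
  | pair _ _ _ _ => exact ⟨(fun s hs => by cases hs), fun s hs => by cases hs⟩
  | p1 h _ =>
    exact ⟨(fun s hs => by cases hs; exact ⟨_, _, h, rfl⟩), fun s hs => by cases hs⟩
  | p2 h _ =>
    exact ⟨(fun s hs => by cases hs), fun s hs => by cases hs; exact ⟨_, _, h, rfl⟩⟩
  | iso _ hiso ih =>
    refine ⟨fun s hs => ?_, fun s hs => ?_⟩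
    · obtain ⟨B₁, B₂, hty, rfl⟩ := ih.1 s hs
      exact ⟨_, B₂, Typing.iso hty (Iso.conjL B₂ hiso), rfl⟩
    · obtain ⟨B₁, B₂, hty, rfl⟩ := ih.2 s hs
      exact ⟨B₁, _, Typing.iso hty (Iso.conjR B₁ hiso), rfl⟩

theorem generation_proj (Γ : List Ty) (s : Tm) (A : Ty) :
    (Typing Γ (Tm.p1 s) A → ∃ B₁ B₂, Typing Γ s (Ty.conj B₁ B₂) ∧ B₁ = A) ∧
    (Typing Γ (Tm.p2 s) A → ∃ B₁ B₂, Typing Γ s (Ty.conj B₁ B₂) ∧ B₂ = A) := ⟨fun h => (gen_aux h).1 s rfl, fun h => (gen_aux h).2 s rfl⟩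
end

section
/- If A ∧ B ≡ C ∧ D, where ≡ is the congruence generated by the distributivity isomorphism, then A ≡ C and B ≡ D. -/
/-- Distribute an arrow over the conjunction structure of the codomain. -/
def distArr (A : Ty) : Ty → Ty
| Ty.conj B C => Ty.conj (distArr A B) (distArr A C)
| B => Ty.arr A B

/-- Full distributive normal form. -/
def nf : Ty → Ty
| Ty.base => Ty.base
| Ty.arr A B => distArr (nf A) (nf B)
| Ty.conj A B => Ty.conj (nf A) (nf B)

lemma iso_distArr (A B : Ty) : Iso (Ty.arr A B) (distArr A B) := by
  induction B with
  | base => exact Iso.refl _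
  | arr B1 B2 _ _ => exact Iso.refl _
  | conj B1 B2 ih1 ih2 =>
    exact Iso.trans (Iso.distr A B1 B2)
      (Iso.trans (Iso.conjL _ ih1) (Iso.conjR _ ih2))

lemma iso_nf (A : Ty) : Iso A (nf A) := by
  induction A with
  | base => exact Iso.refl _
  | arr A B ihA ihB =>
    exact Iso.trans (Iso.trans (Iso.arrL _ ihA) (Iso.arrR _ ihB))
      (iso_distArr (nf A) (nf B))
  | conj A B ihA ihB =>
    exact Iso.trans (Iso.conjL _ ihA) (Iso.conjR _ ihB)

lemma nf_eq_of_iso {A B : Ty} (h : Iso A B) : nf A = nf B := by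
  induction h with
  | refl => rfl
  | symm _ ih => exact ih.symm
  | trans _ _ ih1 ih2 => exact ih1.trans ih2
  | distr A B C => rfl
  | arrL B _ ih => simp [nf, ih]
  | arrR A _ ih => simp [nf, ih]
  | conjL B _ ih => simp [nf, ih]
  | conjR A _ ih => simp [nf, ih]

theorem iso_conj_conj (A B C D : Ty) (h : Iso (Ty.conj A B) (Ty.conj C D)) :
    Iso A C ∧ Iso B D := by
  have := nf_eq_of_iso h
  simp only [nf, Ty.conj.injEq] at this
  exact ⟨Iso.trans (iso_nf A) (this.1 ▸ Iso.symm (iso_nf C)),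
         Iso.trans (iso_nf B) (this.2 ▸ Iso.symm (iso_nf D))⟩
end

section
/- Subject reduction: if Γ ⊢ t : A in the simply typed distributive λ-calculus with typing up to distributivity, and t → s, then Γ ⊢ s : A. -/
namespace SRAux

/-! ### Characterization of Iso via trees of prime types -/

inductive Prime : Ty → Prop
  | base : Prime Ty.base
  | arr (A : Ty) {P : Ty} : Prime P → Prime (Ty.arr A P)

inductive PT : Type
  | leaf : Ty → PT
  | node : PT → PT → PT

def mapT (f : Ty → Ty) : PT → PT
  | .leaf P => .leaf (f P)
  | .node l r => .node (mapT f l) (mapT f r)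

def nfT : Ty → PT
  | .base => .leaf .base
  | .conj A B => .node (nfT A) (nfT B)
  | .arr A B => mapT (Ty.arr A) (nfT B)

def packT : PT → Ty
  | .leaf P => P
  | .node l r => .conj (packT l) (packT r)

inductive PIso : Ty → Ty → Prop
  | base : PIso .base .base
  | arr {A A' P P'} : Iso A A' → PIso P P' → PIso (.arr A P) (.arr A' P')

inductive TIso : PT → PT → Prop
  | leaf {P P'} : PIso P P' → TIso (.leaf P) (.leaf P')
  | node {l l' r r'} : TIso l l' → TIso r r' → TIso (.node l r) (.node l' r')

theorem PIso.symm {P Q} (h : PIso P Q) : PIso Q P := by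
  induction h with
  | base => exact .base
  | arr hA _ ih => exact .arr hA.symm ih

theorem PIso.trans {P Q R} (h : PIso P Q) (h' : PIso Q R) : PIso P R := by
  induction h generalizing R with
  | base => exact h'
  | arr hA _ ih =>
    cases h' with
    | arr hA' hP' => exact .arr (hA.trans hA') (ih hP')

theorem TIso.symm {T T'} (h : TIso T T') : TIso T' T := by
  induction h with
  | leaf h => exact .leaf h.symm
  | node _ _ ih1 ih2 => exact .node ih1 ih2

theorem TIso.trans {T T' T''} (h : TIso T T') (h' : TIso T' T'') : TIso T T'' := by
  induction h generalizing T'' with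
  | leaf h =>
    cases h' with
    | leaf h2 => exact .leaf (h.trans h2)
  | node _ _ ih1 ih2 =>
    cases h' with
    | node h1 h2 => exact .node (ih1 h1) (ih2 h2)

theorem mapT_TIso {A A' T T'} (hA : Iso A A') (h : TIso T T') :
    TIso (mapT (Ty.arr A) T) (mapT (Ty.arr A') T') := by
  induction h with
  | leaf h => exact .leaf (.arr hA h)
  | node _ _ ih1 ih2 => exact .node ih1 ih2

theorem nfT_refl (A : Ty) : TIso (nfT A) (nfT A) := by
  induction A with
  | base => exact .leaf .base
  | conj A B ihA ihB => exact .node ihA ihB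
  | arr A B _ ihB => exact mapT_TIso (Iso.refl A) ihB

theorem iso_sound {A B} (h : Iso A B) : TIso (nfT A) (nfT B) := by
  induction h with
  | refl A => exact nfT_refl A
  | symm _ ih => exact ih.symm
  | trans _ _ ih1 ih2 => exact ih1.trans ih2
  | distr A B C =>
    show TIso (mapT (Ty.arr A) (.node (nfT B) (nfT C))) _
    exact .node (mapT_TIso (Iso.refl A) (nfT_refl B)) (mapT_TIso (Iso.refl A) (nfT_refl C))
  | arrL B h _ => exact mapT_TIso h (nfT_refl B)
  | arrR A _ ih => exact mapT_TIso (Iso.refl A) ih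
  | conjL B _ ih => exact .node ih (nfT_refl B)
  | conjR A _ ih => exact .node (nfT_refl A) ih

theorem piso_iso {P Q} (h : PIso P Q) : Iso P Q := by
  induction h with
  | base => exact .refl _
  | arr hA _ ih => exact (Iso.arrL _ hA).trans (Iso.arrR _ ih)

theorem packT_iso {T T'} (h : TIso T T') : Iso (packT T) (packT T') := by
  induction h with
  | leaf h => exact piso_iso h
  | node _ _ ih1 ih2 => exact (Iso.conjL _ ih1).trans (Iso.conjR _ ih2)

theorem iso_arr_pack (A : Ty) (T : PT) :
    Iso (Ty.arr A (packT T)) (packT (mapT (Ty.arr A) T)) := by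
  induction T with
  | leaf P => exact .refl _
  | node l r ihl ihr =>
    exact (Iso.distr A (packT l) (packT r)).trans
      ((Iso.conjL _ ihl).trans (Iso.conjR _ ihr))

theorem pack_nf (A : Ty) : Iso A (packT (nfT A)) := by
  induction A with
  | base => exact .refl _
  | conj A B ihA ihB => exact (Iso.conjL _ ihA).trans (Iso.conjR _ ihB)
  | arr A B _ ihB => exact (Iso.arrR A ihB).trans (iso_arr_pack A (nfT B))

theorem iso_complete {A B} (h : TIso (nfT A) (nfT B)) : Iso A B :=
  ((pack_nf A).trans (packT_iso h)).trans (pack_nf B).symm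

inductive PrimeT : PT → Prop
  | leaf {P} : Prime P → PrimeT (.leaf P)
  | node {l r} : PrimeT l → PrimeT r → PrimeT (.node l r)

theorem primeT_mapT {A T} (h : PrimeT T) : PrimeT (mapT (Ty.arr A) T) := by
  induction h with
  | leaf h => exact .leaf (.arr A h)
  | node _ _ ih1 ih2 => exact .node ih1 ih2

theorem primeT_nfT (A : Ty) : PrimeT (nfT A) := by
  induction A with
  | base => exact .leaf .base
  | conj A B ihA ihB => exact .node ihA ihB
  | arr A B _ ihB => exact primeT_mapT ihB

theorem nfT_prime {P} (h : Prime P) : nfT P = .leaf P := by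
  induction h with
  | base => rfl
  | arr A _ ih => show mapT (Ty.arr A) _ = _ ; rw [ih]; rfl

theorem nfT_packT {T} (h : PrimeT T) : nfT (packT T) = T := by
  induction h with
  | leaf h => exact nfT_prime h
  | node _ _ ih1 ih2 => show PT.node _ _ = _ ; rw [ih1, ih2]

theorem mapT_TIso_inv {A C T T'} (h : TIso (mapT (Ty.arr A) T) (mapT (Ty.arr C) T')) :
    Iso A C ∧ TIso T T' := by
  induction T generalizing T' with
  | leaf P =>
    cases T' with
    | leaf P' =>
      cases h with
      | leaf h => cases h with | arr hA hP => exact ⟨hA, .leaf hP⟩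
    | node l r => cases h
  | node l r ihl ihr =>
    cases T' with
    | leaf P' => cases h
    | node l' r' =>
      cases h with
      | node h1 h2 =>
        obtain ⟨hA, hT1⟩ := ihl h1
        obtain ⟨_, hT2⟩ := ihr h2
        exact ⟨hA, .node hT1 hT2⟩

theorem iso_arr_arr {A B C D} (h : Iso (Ty.arr A B) (Ty.arr C D)) :
    Iso A C ∧ Iso B D := by
  obtain ⟨hA, hT⟩ := mapT_TIso_inv (iso_sound h)
  exact ⟨hA, iso_complete hT⟩

theorem iso_conj_conj {A B C D} (h : Iso (Ty.conj A B) (Ty.conj C D)) :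
    Iso A C ∧ Iso B D := by
  have h' := iso_sound h
  cases h' with
  | node h1 h2 => exact ⟨iso_complete h1, iso_complete h2⟩

theorem iso_conj_arr {C D A B} (h : Iso (Ty.conj C D) (Ty.arr A B)) :
    ∃ B1 B2, Iso B (Ty.conj B1 B2) ∧ Iso C (Ty.arr A B1) ∧ Iso D (Ty.arr A B2) := by
  have h' : TIso (PT.node (nfT C) (nfT D)) (mapT (Ty.arr A) (nfT B)) := iso_sound h
  have hp := primeT_nfT B
  rcases hnb : nfT B with P | ⟨S1, S2⟩
  · rw [hnb] at h'; simp only [mapT] at h'; cases h'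
  · rw [hnb] at h' hp
    simp only [mapT] at h'

    cases hp with
    | node hp1 hp2 =>
      cases h' with
      | node h1 h2 =>
        refine ⟨packT S1, packT S2, ?_, ?_, ?_⟩
        · have := pack_nf B
          rw [hnb] at this
          exact this
        · apply iso_complete
          show TIso (nfT C) (nfT (Ty.arr A (packT S1)))
          show TIso (nfT C) (mapT (Ty.arr A) (nfT (packT S1)))
          rw [nfT_packT hp1]; exact h1
        · apply iso_complete
          show TIso (nfT D) (mapT (Ty.arr A) (nfT (packT S2)))
          rw [nfT_packT hp2]; exact h2

/-! ### Typing infrastructure -/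

theorem ctx_iso {Γ t B} (h : Typing Γ t B) :
    ∀ Δ, (∀ (n : ℕ) A, Γ[n]? = some A → ∃ A', Δ[n]? = some A' ∧ Iso A' A) →
    Typing Δ t B := by
  induction h with
  | var h =>
    intro Δ hΔ
    obtain ⟨A', h1, h2⟩ := hΔ _ _ h
    exact Typing.iso (Typing.var h1) h2
  | lam _ ih =>
    intro Δ hΔ
    refine Typing.lam (ih _ ?_)
    intro n A h
    match n with
    | 0 => exact ⟨_, rfl, by cases h; exact Iso.refl _⟩
    | n+1 => exact hΔ n A h
  | app _ _ ih1 ih2 => exact fun Δ hΔ => Typing.app (ih1 Δ hΔ) (ih2 Δ hΔ)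
  | pair _ _ ih1 ih2 => exact fun Δ hΔ => Typing.pair (ih1 Δ hΔ) (ih2 Δ hΔ)
  | p1 _ ih => exact fun Δ hΔ => Typing.p1 (ih Δ hΔ)
  | p2 _ ih => exact fun Δ hΔ => Typing.p2 (ih Δ hΔ)
  | iso _ hiso ih => exact fun Δ hΔ => Typing.iso (ih Δ hΔ) hiso

theorem ctx_head {Γ t B A A'} (h : Typing (A' :: Γ) t B) (hA : Iso A A') :
    Typing (A :: Γ) t B := by
  refine ctx_iso h _ ?_
  intro n C hC
  match n with
  | 0 => exact ⟨A, rfl, by cases hC; exact hA⟩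
  | n+1 => exact ⟨C, hC, Iso.refl C⟩

theorem rename_typing {Γ t B} (h : Typing Γ t B) :
    ∀ Δ f, (∀ n A, Γ[n]? = some A → Δ[f n]? = some A) →
    Typing Δ (t.rename f) B := by
  induction h with
  | var h => exact fun Δ f hf => Typing.var (hf _ _ h)
  | lam _ ih =>
    intro Δ f hf
    refine Typing.lam (ih _ _ ?_)
    intro n A h
    match n with
    | 0 => exact h
    | n+1 => exact hf n A h
  | app _ _ ih1 ih2 => exact fun Δ f hf => Typing.app (ih1 Δ f hf) (ih2 Δ f hf)
  | pair _ _ ih1 ih2 => exact fun Δ f hf => Typing.pair (ih1 Δ f hf) (ih2 Δ f hf)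
  | p1 _ ih => exact fun Δ f hf => Typing.p1 (ih Δ f hf)
  | p2 _ ih => exact fun Δ f hf => Typing.p2 (ih Δ f hf)
  | iso _ hiso ih => exact fun Δ f hf => Typing.iso (ih Δ f hf) hiso

theorem subst_typing {Γ t B} (h : Typing Γ t B) :
    ∀ Δ σ, (∀ n A, Γ[n]? = some A → Typing Δ (σ n) A) →
    Typing Δ (t.subst σ) B := by
  induction h with
  | var h => exact fun Δ σ hσ => hσ _ _ h
  | lam _ ih =>
    intro Δ σ hσ
    refine Typing.lam (ih _ _ ?_)
    intro n A h
    match n with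
    | 0 => exact Typing.var (by cases h; rfl)
    | n+1 =>
      refine rename_typing (hσ n A h) _ _ ?_
      intro m C hC
      exact hC
  | app _ _ ih1 ih2 => exact fun Δ σ hσ => Typing.app (ih1 Δ σ hσ) (ih2 Δ σ hσ)
  | pair _ _ ih1 ih2 => exact fun Δ σ hσ => Typing.pair (ih1 Δ σ hσ) (ih2 Δ σ hσ)
  | p1 _ ih => exact fun Δ σ hσ => Typing.p1 (ih Δ σ hσ)
  | p2 _ ih => exact fun Δ σ hσ => Typing.p2 (ih Δ σ hσ)
  | iso _ hiso ih => exact fun Δ σ hσ => Typing.iso (ih Δ σ hσ) hiso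

theorem subst1_typing {Γ t s A B} (ht : Typing (A :: Γ) t B) (hs : Typing Γ s A) :
    Typing Γ (t.subst1 s) B := by
  refine subst_typing ht Γ _ ?_
  intro n C h
  match n with
  | 0 => cases h; exact hs
  | n+1 => exact Typing.var h

/-! ### Inversion lemmas -/

theorem lamInv {Γ t E} (h : Typing Γ (Tm.lam t) E) :
    ∃ A B, Typing (A :: Γ) t B ∧ Iso (Ty.arr A B) E := by
  generalize hu : Tm.lam t = u at h
  induction h with
  | lam ht _ => cases hu; exact ⟨_, _, ht, Iso.refl _⟩
  | iso _ hiso ih =>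
    obtain ⟨A, B, h1, h2⟩ := ih hu
    exact ⟨A, B, h1, h2.trans hiso⟩
  | _ => exact absurd hu (by simp)

theorem appInv {Γ t s E} (h : Typing Γ (Tm.app t s) E) :
    ∃ A B, Typing Γ t (Ty.arr A B) ∧ Typing Γ s A ∧ Iso B E := by
  generalize hu : Tm.app t s = u at h
  induction h with
  | app h1 h2 _ _ => cases hu; exact ⟨_, _, h1, h2, Iso.refl _⟩
  | iso _ hiso ih =>
    obtain ⟨A, B, h1, h2, h3⟩ := ih hu
    exact ⟨A, B, h1, h2, h3.trans hiso⟩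
  | _ => exact absurd hu (by simp)

theorem pairInv {Γ t s E} (h : Typing Γ (Tm.pair t s) E) :
    ∃ A B, Typing Γ t A ∧ Typing Γ s B ∧ Iso (Ty.conj A B) E := by
  generalize hu : Tm.pair t s = u at h
  induction h with
  | pair h1 h2 _ _ => cases hu; exact ⟨_, _, h1, h2, Iso.refl _⟩
  | iso _ hiso ih =>
    obtain ⟨A, B, h1, h2, h3⟩ := ih hu
    exact ⟨A, B, h1, h2, h3.trans hiso⟩
  | _ => exact absurd hu (by simp)

theorem p1Inv {Γ t E} (h : Typing Γ (Tm.p1 t) E) :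
    ∃ A B, Typing Γ t (Ty.conj A B) ∧ Iso A E := by
  generalize hu : Tm.p1 t = u at h
  induction h with
  | p1 h1 _ => cases hu; exact ⟨_, _, h1, Iso.refl _⟩
  | iso _ hiso ih =>
    obtain ⟨A, B, h1, h2⟩ := ih hu
    exact ⟨A, B, h1, h2.trans hiso⟩
  | _ => exact absurd hu (by simp)

theorem p2Inv {Γ t E} (h : Typing Γ (Tm.p2 t) E) :
    ∃ A B, Typing Γ t (Ty.conj A B) ∧ Iso B E := by
  generalize hu : Tm.p2 t = u at h
  induction h with
  | p2 h1 _ => cases hu; exact ⟨_, _, h1, Iso.refl _⟩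
  | iso _ hiso ih =>
    obtain ⟨A, B, h1, h2⟩ := ih hu
    exact ⟨A, B, h1, h2.trans hiso⟩
  | _ => exact absurd hu (by simp)

/-! ### Subject reduction -/

theorem sr_aux {t s : Tm} (hs : Tm.Step t s) :
    ∀ Γ A, Typing Γ t A → Typing Γ s A := by
  induction hs with
  | beta t s =>
    intro Γ E ht
    obtain ⟨B, C, hlam, harg, hCE⟩ := appInv ht
    obtain ⟨B', C', ht', hiso⟩ := lamInv hlam
    obtain ⟨hB, hC⟩ := iso_arr_arr hiso
    have ht'' : Typing (B :: Γ) t C' := ctx_head ht' hB.symm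
    have harg' : Typing Γ s B := harg
    exact Typing.iso (subst1_typing ht'' harg') (hC.trans hCE)
  | proj1 t1 t2 =>
    intro Γ E ht
    obtain ⟨P, Q, hp, hPE⟩ := p1Inv ht
    obtain ⟨P', Q', h1, _, hiso⟩ := pairInv hp
    exact Typing.iso h1 ((iso_conj_conj hiso).1.trans hPE)
  | proj2 t1 t2 =>
    intro Γ E ht
    obtain ⟨P, Q, hp, hQE⟩ := p2Inv ht
    obtain ⟨P', Q', _, h2, hiso⟩ := pairInv hp
    exact Typing.iso h2 ((iso_conj_conj hiso).2.trans hQE)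
  | pairApp t s u =>
    intro Γ E ht
    obtain ⟨B, C, hp, hu, hCE⟩ := appInv ht
    obtain ⟨P, Q, h1, h2, hiso⟩ := pairInv hp
    obtain ⟨C1, C2, hC, hP, hQ⟩ := iso_conj_arr hiso
    have ht1 : Typing Γ (Tm.app t u) C1 := Typing.app (Typing.iso h1 hP) hu
    have ht2 : Typing Γ (Tm.app s u) C2 := Typing.app (Typing.iso h2 hQ) hu
    exact Typing.iso (Typing.pair ht1 ht2) (hC.symm.trans hCE)
  | projLam1 t =>
    intro Γ E ht
    obtain ⟨P, Q, hl, hPE⟩ := p1Inv ht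
    obtain ⟨B, C, ht', hiso⟩ := lamInv hl
    obtain ⟨C1, C2, hC, hP, hQ⟩ := iso_conj_arr hiso.symm
    have : Typing (B :: Γ) (Tm.p1 t) C1 := Typing.p1 (Typing.iso ht' hC)
    exact Typing.iso (Typing.lam this) (hP.symm.trans hPE)
  | projLam2 t =>
    intro Γ E ht
    obtain ⟨P, Q, hl, hQE⟩ := p2Inv ht
    obtain ⟨B, C, ht', hiso⟩ := lamInv hl
    obtain ⟨C1, C2, hC, hP, hQ⟩ := iso_conj_arr hiso.symm
    have : Typing (B :: Γ) (Tm.p2 t) C2 := Typing.p2 (Typing.iso ht' hC)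
    exact Typing.iso (Typing.lam this) (hQ.symm.trans hQE)
  | lam_cong _ ih =>
    intro Γ E ht
    obtain ⟨A, B, h1, h2⟩ := lamInv ht
    exact Typing.iso (Typing.lam (ih _ _ h1)) h2
  | appL _ ih =>
    intro Γ E ht
    obtain ⟨A, B, h1, h2, h3⟩ := appInv ht
    exact Typing.iso (Typing.app (ih _ _ h1) h2) h3
  | appR _ ih =>
    intro Γ E ht
    obtain ⟨A, B, h1, h2, h3⟩ := appInv ht
    exact Typing.iso (Typing.app h1 (ih _ _ h2)) h3
  | pairL _ ih =>
    intro Γ E ht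
    obtain ⟨A, B, h1, h2, h3⟩ := pairInv ht
    exact Typing.iso (Typing.pair (ih _ _ h1) h2) h3
  | pairR _ ih =>
    intro Γ E ht
    obtain ⟨A, B, h1, h2, h3⟩ := pairInv ht
    exact Typing.iso (Typing.pair h1 (ih _ _ h2)) h3
  | p1_cong _ ih =>
    intro Γ E ht
    obtain ⟨A, B, h1, h2⟩ := p1Inv ht
    exact Typing.iso (Typing.p1 (ih _ _ h1)) h2
  | p2_cong _ ih =>
    intro Γ E ht
    obtain ⟨A, B, h1, h2⟩ := p2Inv ht
    exact Typing.iso (Typing.p2 (ih _ _ h1)) h2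

end SRAux

theorem subject_reduction (Γ : List Ty) (t s : Tm) (A : Ty)
    (ht : Typing Γ t A) (hs : Tm.Step t s) : Typing Γ s A :=
  SRAux.sr_aux hs Γ A ht
end

section
/- CR1: for every simple type A, the reducibility interpretation ⟦A⟧ is contained in the set SN of strongly normalizing terms of the distributive λ-calculus. -/
lemma sn_app_left : ∀ {u}, Tm.SN u → ∀ {t s}, u = Tm.app t s → Tm.SN t := by
  intro u h
  induction h with
  | intro x _ ih =>
    intro t s he; subst he
    exact Acc.intro _ fun t' ht' => ih _ (Tm.Step.appL ht') rfl

lemma sn_p1 : ∀ {u}, Tm.SN u → ∀ {t}, u = Tm.p1 t → Tm.SN t := by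
  intro u h
  induction h with
  | intro x _ ih =>
    intro t he; subst he
    exact Acc.intro _ fun t' ht' => ih _ (Tm.Step.p1_cong ht') rfl

lemma cr2 : ∀ (A : Ty) {t t'}, Red A t → Tm.Step t t' → Red A t' := by
  intro A
  induction A with
  | base => intro t t' h hs; exact h.inv hs
  | arr A B _ ihB =>
    intro t t' h hs s hsred
    exact ihB (h s hsred) (Tm.Step.appL hs)
  | conj A B ihA ihB =>
    intro t t' h hs
    exact ⟨ihA h.1 (Tm.Step.p1_cong hs), ihB h.2 (Tm.Step.p2_cong hs)⟩

lemma cr13 : ∀ A : Ty, (∀ t, Red A t → Tm.SN t) ∧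
    (∀ t, Tm.Neutral t → (∀ t', Tm.Step t t' → Red A t') → Red A t) := by
  intro A
  induction A with
  | base =>
    refine ⟨fun t h => h, fun t _ h => Acc.intro _ fun t' ht' => h t' ht'⟩
  | arr A B ihA ihB =>
    constructor
    · intro t h
      have hv : Red A (Tm.var 0) := by
        refine ihA.2 (Tm.var 0) trivial ?_
        intro t' ht'; cases ht'
      have : Tm.SN (Tm.app t (Tm.var 0)) := ihB.1 _ (h (Tm.var 0) hv)
      exact sn_app_left this rfl
    · intro t hneut hred s hs
      have key : ∀ s, Tm.SN s → Red A s → Red B (Tm.app t s) := by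
        intro s hsn
        induction hsn with
        | intro s _ ihs =>
          intro hs
          refine ihB.2 (Tm.app t s) trivial ?_
          intro u hu
          cases hu with
          | beta t0 s0 => exact hneut.elim
          | pairApp t0 s0 u0 => exact hneut.elim
          | appL hst => exact hred _ hst s hs
          | appR hss => exact ihs _ hss (cr2 A hs hss)
      exact key s (ihA.1 s hs) hs
  | conj A B ihA ihB =>
    constructor
    · intro t h
      exact sn_p1 (ihA.1 _ h.1) rfl
    · intro t hneut hred
      constructor
      · refine ihA.2 (Tm.p1 t) trivial ?_
        intro u hu
        cases hu with
        | proj1 t1 t2 => exact hneut.elim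
        | projLam1 t0 => exact hneut.elim
        | p1_cong hst => exact (hred _ hst).1
      · refine ihB.2 (Tm.p2 t) trivial ?_
        intro u hu
        cases hu with
        | proj2 t1 t2 => exact hneut.elim
        | projLam2 t0 => exact hneut.elim
        | p2_cong hst => exact (hred _ hst).2

theorem cr1 (A : Ty) (t : Tm) (h : Red A t) : Tm.SN t := (cr13 A).1 t h
end

section
/- CR3: if t is a neutral term of the distributive λ-calculus (a variable, application, or projection) and every one-step reduct of t is in ⟦A⟧, then t ∈ ⟦A⟧. -/
lemma sn_app_left_s14 {t s : Tm} (h : Tm.SN (Tm.app t s)) : Tm.SN t := by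
  generalize e : Tm.app t s = u at h
  induction h generalizing t s with
  | intro u hu ih =>
    subst e
    constructor
    intro t' ht'
    exact ih _ (Tm.Step.appL ht') rfl

lemma sn_p1_s14 {t : Tm} (h : Tm.SN (Tm.p1 t)) : Tm.SN t := by
  generalize e : Tm.p1 t = u at h
  induction h generalizing t with
  | intro u hu ih =>
    subst e
    constructor
    intro t' ht'
    exact ih _ (Tm.Step.p1_cong ht') rfl

lemma var_no_step {n : ℕ} {s : Tm} (h : Tm.Step (Tm.var n) s) : False := by
  cases h

lemma cr_all (A : Ty) :
    (∀ t, Red A t → Tm.SN t) ∧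
    (∀ t t', Red A t → Tm.Step t t' → Red A t') ∧
    (∀ t, t.Neutral → (∀ s, Tm.Step t s → Red A s) → Red A t) := by
  induction A with
  | base =>
    refine ⟨fun t h => h, fun t t' h hs => ?_, fun t _ h => ?_⟩
    · exact h.inv hs
    · exact ⟨_, h⟩
  | arr A B ihA ihB =>
    obtain ⟨cr1A, cr2A, cr3A⟩ := ihA
    obtain ⟨cr1B, cr2B, cr3B⟩ := ihB
    have varA : ∀ n, Red A (Tm.var n) := fun n =>
      cr3A _ trivial (fun s hs => absurd hs var_no_step)
    refine ⟨fun t h => ?_, fun t t' h hs s hsA => ?_, fun t hn h s hsA => ?_⟩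
    · exact sn_app_left_s14 (cr1B _ (h _ (varA 0)))
    · exact cr2B _ _ (h s hsA) (Tm.Step.appL hs)
    · have hsSN : Tm.SN s := cr1A s hsA
      induction hsSN generalizing t with
      | intro s hacc ih =>
        refine cr3B _ trivial (fun u hu => ?_)
        cases hu with
        | beta t0 s => exact hn.elim
        | pairApp t0 s0 u0 => exact hn.elim
        | appL hstep => exact h _ hstep _ hsA
        | appR hstep => exact ih _ hstep _ hn h (cr2A _ _ hsA hstep)
    
  | conj A B ihA ihB =>
    obtain ⟨cr1A, cr2A, cr3A⟩ := ihA
    obtain ⟨cr1B, cr2B, cr3B⟩ := ihB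
    refine ⟨fun t h => sn_p1_s14 (cr1A _ h.1), fun t t' h hs =>
      ⟨cr2A _ _ h.1 (Tm.Step.p1_cong hs), cr2B _ _ h.2 (Tm.Step.p2_cong hs)⟩,
      fun t hn h => ?_⟩
    constructor
    · refine cr3A _ trivial (fun u hu => ?_)
      cases hu with
      | proj1 t1 t2 => exact hn.elim
      | projLam1 t0 => exact hn.elim
      | p1_cong hstep => exact (h _ hstep).1
    · refine cr3B _ trivial (fun u hu => ?_)
      cases hu with
      | proj2 t1 t2 => exact hn.elim
      | projLam2 t0 => exact hn.elim
      | p2_cong hstep => exact (h _ hstep).2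

theorem cr3 (A : Ty) (t : Tm) (hn : t.Neutral) (h : ∀ s, Tm.Step t s → Red A s) :
    Red A t := (cr_all A).2.2 t hn h
end
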